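/- Suppose lgcd and red satisfy conditions (a) and (b). Let Irr be the set of functions of the form red Λ for Λ : ℕ → Option M nontrivial, and define projections πₙ : Irr → Option (M × PUnit) by πₙ Λ = (Λ n).map (fun υ => (υ, PUnit.unit)). Then (Irr, (πₙ)_{n : ℕ}) is a product of ℕ-many copies of PUnit in Kl(T_M): for every type X and every family of Kleisli morphisms fₙ : X → Option (M × PUnit), there is a unique Kleisli morphism h : X → Option (M × Irr) such that πₙ ∘ h = fₙ (Kleisli composition) for all n. -/

import Mathlib

/-- Kleisli composition for the monad `T_M X = Option (M × X)`. -/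
def KlComp {M : Type} [Monoid M] {X Y Z : Type}
    (g : Y → Option (M × Z)) (f : X → Option (M × Y)) : X → Option (M × Z) :=
  fun x => (f x).bind fun p => (g p.2).map fun q => (p.1 * q.1, q.2)

/-- The Kleisli identity on `X`. -/
def KlId (M : Type) [Monoid M] (X : Type) : X → Option (M × X) :=
  fun x => some (1, x)

/-- A Kleisli morphism is an isomorphism when it has a two-sided inverse. -/
def IsKlIso {M : Type} [Monoid M] {X Y : Type} (f : X → Option (M × Y)) : Prop :=
  ∃ g : Y → Option (M × X), KlComp g f = KlId M X ∧ KlComp f g = KlId M Y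

/-- The class `Surj` of Kleisli morphisms. -/
def KlSurj {M X Y : Type} (f : X → Option (M × Y)) : Prop :=
  ∀ y : Y, ∃ (x : X) (υ : M), f x = some (υ, y)

/-- The class `Inj` of Kleisli morphisms. -/
def KlInj {M X Y : Type} (f : X → Option (M × Y)) : Prop :=
  ∀ (x x' : X) (υ υ' : M) (y : Y), f x = some (υ, y) → f x' = some (υ', y) → x = x'

/-- The class `Tot` of Kleisli morphisms. -/
def KlTot {M X Y : Type} (f : X → Option (M × Y)) : Prop :=
  ∀ x : X, f x ≠ none

/-- The class `Inv` of Kleisli morphisms. -/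
def KlInv {M : Type} [Monoid M] {X Y : Type} (f : X → Option (M × Y)) : Prop :=
  ∀ (x : X) (υ : M) (y : Y), f x = some (υ, y) → IsUnit υ
/-- `Λ : ℕ → Option M` is nontrivial if it is defined somewhere. -/
def NontrivialFn {M : Type} (Λ : ℕ → Option M) : Prop :=
  Λ ≠ fun _ => none

/-- `υ • Λ`, multiplying each defined value of `Λ` by `υ` on the left. -/
def smulFn {M : Type} [Monoid M] (υ : M) (Λ : ℕ → Option M) : ℕ → Option M :=
  fun n => (Λ n).map (υ * ·)

/-- The functions `lgcd` and `red` satisfy conditions (a) and (b). -/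
def SatisfiesLgcdRed (M : Type) [Monoid M] (lgcd : (ℕ → Option M) → M)
    (red : (ℕ → Option M) → (ℕ → Option M)) : Prop :=
  (∀ Λ, NontrivialFn Λ → NontrivialFn (red Λ)) ∧
  (∀ Λ, NontrivialFn Λ → Λ = smulFn (lgcd Λ) (red Λ)) ∧
  (∀ Γ Λ, NontrivialFn Γ → NontrivialFn Λ → ∀ υ ν : M,
    smulFn υ (red Γ) = smulFn ν (red Λ) → υ = ν ∧ red Γ = red Λ)

/-- The set of irreducible partial functions: the image of `red` on
nontrivial functions. -/
def Irr {M : Type} (red : (ℕ → Option M) → (ℕ → Option M)) : Type :=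
  {Λ : ℕ → Option M // ∃ Γ : ℕ → Option M, NontrivialFn Γ ∧ red Γ = Λ}

theorem irr_is_countable_power_of_one (M : Type) [Monoid M]
    (lgcd : (ℕ → Option M) → M) (red : (ℕ → Option M) → (ℕ → Option M))
    (h : SatisfiesLgcdRed M lgcd red) :
    ∀ (X : Type) (f : ℕ → X → Option (M × PUnit)),
      ∃! g : X → Option (M × Irr red),
        ∀ n : ℕ,
          KlComp (fun Λ : Irr red => (Λ.1 n).map fun υ => (υ, PUnit.unit)) g
            = f n := by
  classical
  obtain ⟨hred, ha, hb⟩ := h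
  intro X f
  -- the family extracted from f
  set Φ : X → ℕ → Option M := fun x n => (f n x).map Prod.fst with hΦ
  have hfx : ∀ n x, f n x = (Φ x n).map fun υ => (υ, PUnit.unit) := by
    intro n x
    simp only [hΦ, Option.map_map]
    cases f n x with
    | none => rfl
    | some p => simp
  refine ⟨fun x =>
    if hx : NontrivialFn (Φ x) then
      some (lgcd (Φ x), ⟨red (Φ x), Φ x, hx, rfl⟩)
    else none, ?_, ?_⟩
  · intro n
    funext x
    by_cases hx : NontrivialFn (Φ x)
    · simp only [KlComp, hx, dif_pos]
      have := congrFun (ha (Φ x) hx) n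
      rw [hfx n x, this]
      simp only [smulFn, Option.map_map, Option.bind_some]
      cases hr : red (Φ x) n <;> simp [hr]
    · simp only [KlComp, hx, dif_neg, not_false_iff]
      have : Φ x = fun _ => none := by
        by_contra hc; exact hx hc
      have hn := congrFun this n
      rw [hfx n x, hn]
      rfl
  · intro g' hg'
    funext x
    by_cases hx : NontrivialFn (Φ x)
    · simp only [hx, dif_pos]
      cases hgx : g' x with
      | none =>
        exfalso
        apply hx
        funext n
        have := congrFun (hg' n) x
        simp only [KlComp, hgx] at this
        simp [hΦ, ← this]
      | some p =>
        obtain ⟨υ, Λ⟩ := p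
        obtain ⟨Γ, hΓnt, hΓ⟩ := Λ.2
        have hΛs : Φ x = smulFn υ Λ.1 := by
          funext n
          have := congrFun (hg' n) x
          simp only [KlComp, hgx] at this
          simp only [hΦ, ← this, smulFn, KlComp, Option.bind_some,
            Option.map_map]
          cases (Λ : {Λ : ℕ → Option M // ∃ Γ, NontrivialFn Γ ∧ red Γ = Λ}).val n <;> rfl
        have hkey : smulFn υ (red Γ) = smulFn (lgcd (Φ x)) (red (Φ x)) := by
          rw [hΓ, ← hΛs]; exact ha (Φ x) hx
        obtain ⟨he1, he2⟩ := hb Γ (Φ x) hΓnt hx υ (lgcd (Φ x)) hkey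
        exact congrArg some (Prod.ext he1 (Subtype.ext (hΓ ▸ he2)))
    · simp only [hx, dif_neg, not_false_iff]
      have hΦx : Φ x = fun _ => none := by
        by_contra hc; exact hx hc
      cases hgx : g' x with
      | none => rfl
      | some p =>
        exfalso
        obtain ⟨υ, Λ⟩ := p
        obtain ⟨Γ, hΓnt, hΓ⟩ := Λ.2
        have hrnt := hred Γ hΓnt
        rw [hΓ] at hrnt
        apply hrnt
        funext n
        have := congrFun (hg' n) x
        simp only [KlComp, hgx, Option.bind_some, Option.map_map] at this
        have hfn : f n x = none := by
          rw [hfx n x, congrFun hΦx n]; rfl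
        rw [hfn] at this
        exact Option.map_eq_none_iff.mp this
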